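/- A solvable Pick interpolation problem D ∋ z_j ↦ w_j ∈ closure(D), 1 ≤ j ≤ n, has a unique holomorphic solution f: D → closure(D) if and only if (w1,…,wn) ∈ ∂𝒟_n. -/

import Mathlib

open Complex Metric Set

def PickBodyD (n : ℕ) (z : Fin n → ℂ) : Set (Fin n → ℂ) :=
  {w | ∃ f : ℂ → ℂ, DifferentiableOn ℂ f (ball (0:ℂ) 1) ∧
        (∃ c : ℝ, c < 1 ∧ ∀ x ∈ ball (0:ℂ) 1, ‖f x‖ ≤ c) ∧ ∀ j, f (z j) = w j}


noncomputable def mob (w b : ℂ) : ℂ := (b + w) / (1 + (starRingEnd ℂ) w * b)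

lemma mob_denom_ne {w b : ℂ} (hw : norm w < 1) (hb : norm b ≤ 1) :
    1 + (starRingEnd ℂ) w * b ≠ 0 := by
  intro h
  have h1 : (starRingEnd ℂ) w * b = -1 := by linear_combination h
  have h2 : norm ((starRingEnd ℂ) w * b) = 1 := by rw [h1]; simp
  rw [norm_mul, Complex.norm_conj] at h2
  nlinarith [norm_nonneg w, norm_nonneg b]

lemma mob_identity (w b : ℂ) :
    normSq (1 + (starRingEnd ℂ) w * b) - normSq (b + w)
      = (1 - normSq b) * (1 - normSq w) := by
  simp [Complex.normSq_apply, Complex.mul_re, Complex.mul_im, Complex.add_re, Complex.add_im]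
  ring

lemma mob_one_sub_normSq {w b : ℂ} (hw : norm w < 1) (hb : norm b ≤ 1) :
    1 - normSq (mob w b)
      = (1 - normSq b) * (1 - normSq w) / normSq (1 + (starRingEnd ℂ) w * b) := by
  have hd := mob_denom_ne hw hb
  have hd' : normSq (1 + (starRingEnd ℂ) w * b) ≠ 0 := by
    simpa [Complex.normSq_eq_zero] using hd
  rw [mob, normSq_div, ← mob_identity w b]
  rw [sub_div, div_self hd']

lemma normSq_lt_one' {b : ℂ} (hb : norm b < 1) : normSq b < 1 := by
  rw [← Complex.sq_norm]; nlinarith [norm_nonneg b]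

lemma normSq_le_one' {b : ℂ} (hb : norm b ≤ 1) : normSq b ≤ 1 := by
  rw [← Complex.sq_norm]; nlinarith [norm_nonneg b]

lemma mob_abs_lt {w b : ℂ} (hw : norm w < 1) (hb : norm b < 1) :
    norm (mob w b) < 1 := by
  have h := mob_one_sub_normSq hw hb.le
  have h1 : normSq (mob w b) < 1 := by
    have hnum : 0 < (1 - normSq b) * (1 - normSq w) :=
      mul_pos (by linarith [normSq_lt_one' hb]) (by linarith [normSq_lt_one' hw])
    have hden : 0 < normSq (1 + (starRingEnd ℂ) w * b) := by
      have := mob_denom_ne hw hb.le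
      simpa [Complex.normSq_pos] using this
    nlinarith [div_pos hnum hden]
  rw [Complex.norm_def]
  calc Real.sqrt (normSq (mob w b)) < Real.sqrt 1 :=
        Real.sqrt_lt_sqrt (normSq_nonneg _) h1
    _ = 1 := Real.sqrt_one

lemma mob_inv {w b : ℂ} (hw : norm w < 1) (hb : norm b < 1) :
    mob w (mob (-w) b) = b := by
  have hw' : norm (-w) < 1 := by simpa using hw
  have h1 : 1 + (starRingEnd ℂ) (-w) * b ≠ 0 := mob_denom_ne hw' hb.le
  have h2 : 1 + (starRingEnd ℂ) w * (mob (-w) b) ≠ 0 :=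
    mob_denom_ne hw (mob_abs_lt hw' hb).le
  simp only [mob, map_neg, neg_mul] at h1 h2 ⊢
  rw [div_eq_iff h2]
  simp only [div_eq_mul_inv]
  linear_combination (b - w) * mul_inv_cancel₀ h1

lemma mob_zero (w : ℂ) : mob w 0 = w := by simp [mob]

lemma mob_self_neg (w : ℂ) : mob (-w) w = 0 := by simp [mob]

lemma mem_D_iff {x : ℂ} : x ∈ ball (0:ℂ) 1 ↔ norm x < 1 := by
  simp [mem_ball, Complex.dist_eq]

lemma mob_diffOn {w : ℂ} {F : ℂ → ℂ} (hw : norm w < 1)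
    (hF : DifferentiableOn ℂ F (ball (0:ℂ) 1))
    (hF1 : ∀ x ∈ ball (0:ℂ) 1, norm (F x) ≤ 1) :
    DifferentiableOn ℂ (fun x => mob w (F x)) (ball (0:ℂ) 1) := by
  simp only [mob]
  refine DifferentiableOn.div (hF.add_const w) ?_ ?_
  · exact (differentiableOn_const 1).add ((differentiableOn_const _).mul hF)
  · intro x hx
    exact mob_denom_ne hw (hF1 x hx)

/-! ### Schwarz lemma and the Blaschke quotient -/

lemma schwarz_abs {h : ℂ → ℂ} (hd : DifferentiableOn ℂ h (ball (0:ℂ) 1))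
    (hm : MapsTo h (ball (0:ℂ) 1) (ball (0:ℂ) 1)) (h0 : h 0 = 0) :
    ∀ y ∈ ball (0:ℂ) 1, norm (h y) ≤ norm y := by
  intro y hy
  rcases eq_or_ne y 0 with rfl | hy0
  · simp [h0]
  · have hm' : MapsTo h (ball (0:ℂ) 1) (ball (h 0) 1) := by rwa [h0]
    have := Complex.norm_dslope_le_div_of_mapsTo_ball hd (hm'.mono_right ball_subset_closedBall) hy
    rw [dslope_of_ne _ hy0, slope_def_field, h0, sub_zero, sub_zero] at this
    rw [norm_div] at this
    have hy' : (0:ℝ) < ‖y‖ := by simpa [norm_pos_iff] using hy0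
    rw [div_le_iff₀ hy'] at this
    rw [one_div_one, one_mul] at this
    calc norm (h y) = ‖h y‖ := rfl
      _ ≤ ‖y‖ := this
      _ = norm y := rfl

lemma blaschke_quot {a : ℂ} (ha : a ∈ ball (0:ℂ) 1) {h : ℂ → ℂ}
    (hd : DifferentiableOn ℂ h (ball (0:ℂ) 1))
    (hm : MapsTo h (ball (0:ℂ) 1) (ball (0:ℂ) 1)) (h0 : h a = 0) :
    DifferentiableOn ℂ (fun x => dslope h a x * (1 - (starRingEnd ℂ) a * x)) (ball (0:ℂ) 1) ∧
    (∀ x ∈ ball (0:ℂ) 1,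
      norm (dslope h a x * (1 - (starRingEnd ℂ) a * x)) ≤ 1) ∧
    (∀ x ∈ ball (0:ℂ) 1,
      h x = (dslope h a x * (1 - (starRingEnd ℂ) a * x)) * mob (-a) x) := by
  have haD : norm a < 1 := mem_D_iff.1 ha
  have hdenom : ∀ x ∈ ball (0:ℂ) 1, 1 - (starRingEnd ℂ) a * x ≠ 0 := by
    intro x hx
    have := mob_denom_ne (b := x) (w := -a) (by simpa using haD) (mem_D_iff.1 hx).le
    simpa [neg_mul, sub_eq_add_neg] using this
  have hqdiff : DifferentiableOn ℂ
      (fun x => dslope h a x * (1 - (starRingEnd ℂ) a * x)) (ball (0:ℂ) 1) := by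
    refine DifferentiableOn.mul ?_ ?_
    · exact (differentiableOn_dslope (isOpen_ball.mem_nhds ha)).mpr hd
    · exact (differentiableOn_const 1).sub ((differentiableOn_const _).mul differentiableOn_id)
  have hfact : ∀ x ∈ ball (0:ℂ) 1,
      h x = (dslope h a x * (1 - (starRingEnd ℂ) a * x)) * mob (-a) x := by
    intro x hx
    rcases eq_or_ne x a with rfl | hxa
    · simp [h0, mob_self_neg]
    · rw [dslope_of_ne _ hxa, slope_def_field, h0, sub_zero]
      have hden := hdenom x hx
      have hxa' : x - a ≠ 0 := sub_ne_zero.2 hxa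
      simp only [mob, map_neg, neg_mul]
      rw [← sub_eq_add_neg]
      field_simp
      linear_combination (-(h x)) * mul_inv_cancel₀ hden
  refine ⟨hqdiff, ?_, hfact⟩
  have hψdiff : DifferentiableOn ℂ (fun y => mob a y) (ball (0:ℂ) 1) := by
    simpa [mob] using mob_diffOn haD differentiableOn_id
      (fun x hx => (mem_D_iff.1 hx).le)
  have hψmaps : MapsTo (fun y => mob a y) (ball (0:ℂ) 1) (ball (0:ℂ) 1) := by
    intro y hy; exact mem_D_iff.2 (mob_abs_lt haD (mem_D_iff.1 hy))
  have hφdiff : DifferentiableOn ℂ (fun y => h (mob a y)) (ball (0:ℂ) 1) :=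
    hd.comp hψdiff hψmaps
  have hφmaps : MapsTo (fun y => h (mob a y)) (ball (0:ℂ) 1) (ball (0:ℂ) 1) :=
    fun y hy => hm (hψmaps hy)
  have hφ0 : h (mob a 0) = 0 := by rw [mob_zero]; exact h0
  have hSch := schwarz_abs hφdiff hφmaps hφ0
  have hbnd_ne : ∀ x ∈ ball (0:ℂ) 1, x ≠ a →
      norm (dslope h a x * (1 - (starRingEnd ℂ) a * x)) ≤ 1 := by
    intro x hx hxa
    have hyD : mob (-a) x ∈ ball (0:ℂ) 1 :=
      mem_D_iff.2 (mob_abs_lt (by simpa using haD) (mem_D_iff.1 hx))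
    have hxeq : mob a (mob (-a) x) = x := mob_inv haD (mem_D_iff.1 hx)
    have hhx : norm (h x) ≤ norm (mob (-a) x) := by
      have := hSch _ hyD
      rwa [hxeq] at this
    have hden := hdenom x hx
    have hxa' : x - a ≠ 0 := sub_ne_zero.2 hxa
    have habs_mob : norm (mob (-a) x)
        = norm (x - a) / norm (1 - (starRingEnd ℂ) a * x) := by
      simp only [mob, map_neg, neg_mul, ← sub_eq_add_neg, norm_div]
    rw [dslope_of_ne _ hxa, slope_def_field, h0, sub_zero]
    rw [norm_mul, norm_div]
    have hB : (0:ℝ) < norm (x - a) := by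
      simpa [norm_pos_iff] using hxa'
    have hC : (0:ℝ) < norm (1 - (starRingEnd ℂ) a * x) := by
      simpa [norm_pos_iff] using hden
    rw [habs_mob] at hhx
    rw [div_mul_eq_mul_div, div_le_one hB]
    calc norm (h x) * norm (1 - (starRingEnd ℂ) a * x)
        ≤ (norm (x - a) / norm (1 - (starRingEnd ℂ) a * x))
            * norm (1 - (starRingEnd ℂ) a * x) :=
          mul_le_mul_of_nonneg_right hhx hC.le
      _ = norm (x - a) := div_mul_cancel₀ _ hC.ne'
  intro x hx
  rcases eq_or_ne x a with rfl | hxa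
  · set q := fun y => dslope h x y * (1 - (starRingEnd ℂ) x * y) with hq
    have hqc : ContinuousAt q x :=
      (hqdiff.differentiableAt (isOpen_ball.mem_nhds hx)).continuousAt
    have htend : Filter.Tendsto (fun y => norm (q y)) (nhdsWithin x {x}ᶜ)
        (nhds (norm (q x))) :=
      (continuous_norm.continuousAt.comp hqc).tendsto.mono_left nhdsWithin_le_nhds
    refine le_of_tendsto htend ?_
    have h1 : ∀ᶠ y in nhdsWithin x {x}ᶜ, y ∈ ball (0:ℂ) 1 :=
      mem_nhdsWithin_of_mem_nhds (isOpen_ball.mem_nhds hx)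
    have h2 : ∀ᶠ y in nhdsWithin x {x}ᶜ, y ≠ x := by
      filter_upwards [self_mem_nhdsWithin] with y hy
      exact hy
    filter_upwards [h1, h2] with y hy1 hy2
    exact hbnd_ne y hy1 hy2
  · exact hbnd_ne x hx hxa

lemma const_of_abs_eq_one {f : ℂ → ℂ} (hd : DifferentiableOn ℂ f (ball (0:ℂ) 1))
    (hm : MapsTo f (ball (0:ℂ) 1) (closedBall (0:ℂ) 1)) {x₀ : ℂ} (hx₀ : x₀ ∈ ball (0:ℂ) 1)
    (h1 : norm (f x₀) = 1) : EqOn f (fun _ => f x₀) (ball (0:ℂ) 1) := by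
  have hmax : IsMaxOn (norm ∘ f) (ball (0:ℂ) 1) x₀ := by
    intro x hx
    have : norm (f x) ≤ 1 := by
      have := hm hx; simpa [mem_closedBall, Complex.dist_eq] using this
    simp only [Function.comp_apply]
    calc ‖f x‖ = norm (f x) := rfl
      _ ≤ 1 := this
      _ = ‖f x₀‖ := h1.symm
  exact Complex.eqOn_of_isPreconnected_of_isMaxOn_norm
    (convex_ball (0:ℂ) 1).isPreconnected isOpen_ball hd hx₀ hmax

lemma lagrange_bound (n : ℕ) (z : Fin n → ℂ)
    (hz : ∀ j, z j ∈ ball (0:ℂ) 1) (hinj : Function.Injective z) :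
    ∃ M : ℝ, 0 < M ∧ ∀ (v : Fin n → ℂ) (ε : ℝ), 0 ≤ ε → (∀ j, norm (v j) ≤ ε) →
      ∃ p : ℂ → ℂ, Differentiable ℂ p ∧ (∀ j, p (z j) = v j) ∧
        ∀ x ∈ ball (0:ℂ) 1, norm (p x) ≤ M * ε := by
  classical
  set L : Fin n → ℂ → ℂ :=
    fun j x => ∏ k ∈ Finset.univ.erase j, ((x - z k) * (z j - z k)⁻¹) with hL
  have hLdiff : ∀ j, Differentiable ℂ (L j) := by
    intro j
    apply Differentiable.fun_finsetProd
    intro k _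
    exact (differentiable_id.sub_const _).mul_const _
  have hzne : ∀ {j k : Fin n}, k ≠ j → z j - z k ≠ 0 := by
    intro j k hkj
    exact sub_ne_zero.2 fun h => hkj (hinj h.symm)
  have hLself : ∀ j, L j (z j) = 1 := by
    intro j
    rw [hL]
    refine Finset.prod_eq_one ?_
    intro k hk
    exact mul_inv_cancel₀ (hzne (Finset.ne_of_mem_erase hk))
  have hLother : ∀ j i, i ≠ j → L j (z i) = 0 := by
    intro j i hij
    rw [hL]
    refine Finset.prod_eq_zero (Finset.mem_erase.2 ⟨hij, Finset.mem_univ i⟩) ?_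
    simp
  set Mj : Fin n → ℝ := fun j => ∏ k ∈ Finset.univ.erase j,
    (2 * (norm (z j - z k))⁻¹) with hMj
  have hMjnn : ∀ j, 0 ≤ Mj j := by
    intro j
    apply Finset.prod_nonneg
    intro k _
    positivity
  have hLbound : ∀ j, ∀ x ∈ ball (0:ℂ) 1, norm (L j x) ≤ Mj j := by
    intro j x hx
    rw [hL, hMj]
    simp only
    rw [norm_prod]
    apply Finset.prod_le_prod
    · intro k _; positivity
    · intro k hk
      rw [norm_mul, norm_inv]
      apply mul_le_mul_of_nonneg_right _ (by positivity)
      calc norm (x - z k) ≤ norm x + norm (z k) := by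
            simpa [sub_eq_add_neg] using norm_add_le x (-(z k))
        _ ≤ 2 := by
            have h1 := mem_D_iff.1 hx
            have h2 := mem_D_iff.1 (hz k)
            linarith
  refine ⟨(∑ j, Mj j) + 1, by positivity, ?_⟩
  intro v ε hε0 hv
  refine ⟨fun x => ∑ j, v j * L j x, ?_, ?_, ?_⟩
  · apply Differentiable.fun_sum
    intro j _
    exact (differentiable_const _).mul (hLdiff j)
  · intro i
    show ∑ j, v j * L j (z i) = v i
    rw [Finset.sum_eq_single i]
    · rw [hLself i, mul_one]
    · intro j _ hji
      rw [hLother j i (by exact fun h => hji (h ▸ rfl))]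
      · simp
    · intro h; exact absurd (Finset.mem_univ i) h
  · intro x hx
    calc norm (∑ j, v j * L j x) ≤ ∑ j, norm (v j * L j x) :=
          norm_sum_le _ _
      _ ≤ ∑ j, ε * Mj j := by
          apply Finset.sum_le_sum
          intro j _
          rw [norm_mul]
          exact mul_le_mul (hv j) (hLbound j x hx) (norm_nonneg _) hε0
      _ = (∑ j, Mj j) * ε := by
          rw [Finset.sum_mul]
          exact Finset.sum_congr rfl fun j _ => mul_comm _ _
      _ ≤ ((∑ j, Mj j) + 1) * ε := by
          apply mul_le_mul_of_nonneg_right _ hε0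
          linarith

lemma pick_open (n : ℕ) (z : Fin n → ℂ) (hz : ∀ j, z j ∈ ball (0:ℂ) 1)
    (hinj : Function.Injective z) : IsOpen (PickBodyD n z) := by
  obtain ⟨M, hM, hLag⟩ := lagrange_bound n z hz hinj
  rw [Metric.isOpen_iff]
  rintro w ⟨f, hf, ⟨c, hc, hbd⟩, hint⟩
  have hc0 : 0 ≤ c := le_trans (norm_nonneg (f 0)) (hbd 0 (by simp))
  have h1c : 0 < 1 - c := by linarith
  refine ⟨(1 - c)/(2*M), by positivity, ?_⟩
  intro w' hw'
  have hd : ∀ j, norm (w' j - w j) ≤ (1-c)/(2*M) := by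
    intro j
    calc norm (w' j - w j) = dist (w' j) (w j) := (Complex.dist_eq _ _).symm
      _ ≤ dist w' w := dist_le_pi_dist w' w j
      _ ≤ (1-c)/(2*M) := (mem_ball.1 hw').le
  obtain ⟨p, hp, hpv, hpb⟩ := hLag (fun j => w' j - w j) ((1-c)/(2*M)) (by positivity) hd
  refine ⟨fun x => f x + p x, hf.add hp.differentiableOn, ⟨(1+c)/2, by linarith, ?_⟩, ?_⟩
  · intro x hx
    calc norm (f x + p x) ≤ norm (f x) + norm (p x) :=
          norm_add_le _ _
      _ ≤ c + M * ((1-c)/(2*M)) := add_le_add (hbd x hx) (hpb x hx)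
      _ = (1+c)/2 := by field_simp; ring
  · intro j
    show f (z j) + p (z j) = w' j
    rw [hint j, hpv j]; ring

lemma pick_mem_closure (n : ℕ) (z : Fin n → ℂ) (w : Fin n → ℂ)
    (hw : ∀ j, w j ∈ closedBall (0:ℂ) 1)
    (hsolv : ∃ f : ℂ → ℂ, DifferentiableOn ℂ f (ball (0:ℂ) 1) ∧
      MapsTo f (ball (0:ℂ) 1) (closedBall (0:ℂ) 1) ∧ ∀ j, f (z j) = w j) :
    w ∈ closure (PickBodyD n z) := by
  rw [Metric.mem_closure_iff]
  intro ε hε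
  obtain ⟨f, hf, hm, hint⟩ := hsolv
  set s : ℝ := max 0 (1 - ε/2) with hs
  have hs0 : 0 ≤ s := le_max_left _ _
  have hs1 : s < 1 := by
    apply max_lt one_pos
    linarith
  have h1s : 1 - s ≤ ε/2 := by
    have := le_max_right 0 (1 - ε/2); linarith
  have habs_s : norm ((s:ℝ):ℂ) = s := by
    rw [Complex.norm_real, Real.norm_eq_abs, _root_.abs_of_nonneg hs0]
  refine ⟨fun j => ((s:ℝ):ℂ) * w j,
    ⟨fun x => ((s:ℝ):ℂ) * f x, hf.const_smul ((s:ℝ):ℂ) |>.congr (fun x _ => by simp [smul_eq_mul]),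
      ⟨s, hs1, ?_⟩, ?_⟩, ?_⟩
  · intro x hx
    rw [norm_mul, habs_s]
    have hf1 : norm (f x) ≤ 1 := by
      simpa [mem_closedBall, Complex.dist_eq] using hm hx
    nlinarith
  · intro j
    show ((s:ℝ):ℂ) * f (z j) = _
    rw [hint j]
  · rw [dist_pi_lt_iff hε]
    intro j
    rw [Complex.dist_eq]
    have : w j - ((s:ℝ):ℂ) * w j = ((1 - s:ℝ):ℂ) * w j := by push_cast; ring
    rw [this, norm_mul]
    have h1 : norm ((1 - s:ℝ):ℂ) = 1 - s := by
      rw [Complex.norm_real, Real.norm_eq_abs, _root_.abs_of_nonneg (by linarith)]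
    have h2 : norm (w j) ≤ 1 := by
      simpa [mem_closedBall, Complex.dist_eq] using hw j
    rw [h1]
    nlinarith [norm_nonneg (w j)]

lemma exists_ball_not_range (n : ℕ) (z : Fin n → ℂ) :
    ∃ x ∈ ball (0:ℂ) 1, ∀ j, x ≠ z j := by
  have hinf : (ball (0:ℂ) 1).Infinite :=
    infinite_of_mem_nhds (0:ℂ) (isOpen_ball.mem_nhds (by simp))
  have : ((ball (0:ℂ) 1) \ Set.range z).Infinite := hinf.diff (Set.finite_range z)
  obtain ⟨x, hx⟩ := this.nonempty
  exact ⟨x, hx.1, fun j h => hx.2 ⟨j, h.symm⟩⟩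

/-! ### The key lemma: non-uniqueness implies a strict solution exists -/

lemma pick_key : ∀ (n : ℕ) (z : Fin n → ℂ), (∀ j, z j ∈ ball (0:ℂ) 1) →
    Function.Injective z → ∀ (w : Fin n → ℂ) (f g : ℂ → ℂ),
    DifferentiableOn ℂ f (ball (0:ℂ) 1) →
    MapsTo f (ball (0:ℂ) 1) (closedBall (0:ℂ) 1) → (∀ j, f (z j) = w j) →
    DifferentiableOn ℂ g (ball (0:ℂ) 1) →
    MapsTo g (ball (0:ℂ) 1) (closedBall (0:ℂ) 1) → (∀ j, g (z j) = w j) →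
    ¬ EqOn f g (ball (0:ℂ) 1) → w ∈ PickBodyD n z := by
  intro n
  induction n with
  | zero =>
      intro z hz hinj w f g _ _ _ _ _ _ _
      exact ⟨fun _ => 0, differentiableOn_const 0,
        ⟨1/2, by norm_num, fun x _ => by norm_num⟩, fun j => j.elim0⟩
  | succ n ih =>
      intro z hz hinj w f g hfd hfm hfi hgd hgm hgi hne
      -- a point where f and g differ
      have hxw : ∃ x ∈ ball (0:ℂ) 1, f x ≠ g x := by
        by_contra hcon
        push_neg at hcon
        exact hne fun x hx => hcon x hx
      obtain ⟨xh, hxhD, hxhne⟩ := hxw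
      -- every solution has modulus < 1 everywhere
      have hlt : ∀ (F : ℂ → ℂ), DifferentiableOn ℂ F (ball (0:ℂ) 1) →
          MapsTo F (ball (0:ℂ) 1) (closedBall (0:ℂ) 1) → (∀ j, F (z j) = w j) →
          ∀ x ∈ ball (0:ℂ) 1, norm (F x) < 1 := by
        intro F hFd hFm hFi x hx
        have hle : norm (F x) ≤ 1 := by
          simpa [mem_closedBall, Complex.dist_eq] using hFm hx
        rcases hle.lt_or_eq with h | h
        · exact h
        exfalso
        have hconstF := const_of_abs_eq_one hFd hFm hx h
        have h1 : norm (w 0) = 1 := by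
          rw [← hFi 0, hconstF (hz 0)]; exact h
        have hf1 : norm (f (z 0)) = 1 := by rw [hfi 0]; exact h1
        have hg1 : norm (g (z 0)) = 1 := by rw [hgi 0]; exact h1
        have hcf := const_of_abs_eq_one hfd hfm (hz 0) hf1
        have hcg := const_of_abs_eq_one hgd hgm (hz 0) hg1
        apply hne
        intro y hy
        calc f y = f (z 0) := hcf hy
          _ = w 0 := hfi 0
          _ = g (z 0) := (hgi 0).symm
          _ = g y := (hcg hy).symm
      have hflt := hlt f hfd hfm hfi
      have hglt := hlt g hgd hgm hgi
      have hwlt : ∀ j, norm (w j) < 1 := fun j => by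
        rw [← hfi j]; exact hflt _ (hz j)
      set z₀ := z 0 with hz₀def
      set w₀ := w 0 with hw₀def
      have hz₀D : norm z₀ < 1 := mem_D_iff.1 (hz 0)
      have hw₀D : norm w₀ < 1 := hwlt 0
      have hw₀D' : norm (-w₀) < 1 := by simpa using hw₀D
      have hz₀D' : norm (-z₀) < 1 := by simpa using hz₀D
      -- shifted solutions
      set f₁ : ℂ → ℂ := fun x => mob (-w₀) (f x) with hf₁def
      set g₁ : ℂ → ℂ := fun x => mob (-w₀) (g x) with hg₁def
      have hf₁d : DifferentiableOn ℂ f₁ (ball (0:ℂ) 1) :=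
        mob_diffOn hw₀D' hfd fun x hx => (hflt x hx).le
      have hg₁d : DifferentiableOn ℂ g₁ (ball (0:ℂ) 1) :=
        mob_diffOn hw₀D' hgd fun x hx => (hglt x hx).le
      have hf₁m : MapsTo f₁ (ball (0:ℂ) 1) (ball (0:ℂ) 1) := fun x hx =>
        mem_D_iff.2 (mob_abs_lt hw₀D' (hflt x hx))
      have hg₁m : MapsTo g₁ (ball (0:ℂ) 1) (ball (0:ℂ) 1) := fun x hx =>
        mem_D_iff.2 (mob_abs_lt hw₀D' (hglt x hx))
      have hf₁0 : f₁ z₀ = 0 := by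
        rw [hf₁def]; simp only; rw [hfi 0, ← hw₀def, mob_self_neg]
      have hg₁0 : g₁ z₀ = 0 := by
        rw [hg₁def]; simp only; rw [hgi 0, ← hw₀def, mob_self_neg]
      obtain ⟨hqfd, hqfb, hqff⟩ := blaschke_quot (hz 0) hf₁d hf₁m hf₁0
      obtain ⟨hqgd, hqgb, hqgf⟩ := blaschke_quot (hz 0) hg₁d hg₁m hg₁0
      set qf : ℂ → ℂ := fun x => dslope f₁ z₀ x * (1 - (starRingEnd ℂ) z₀ * x) with hqfdef
      set qg : ℂ → ℂ := fun x => dslope g₁ z₀ x * (1 - (starRingEnd ℂ) z₀ * x) with hqgdef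
      -- new data
      set z' : Fin n → ℂ := fun j => z j.succ with hz'def
      set w' : Fin n → ℂ := fun j => qf (z' j) with hw'def
      have hz' : ∀ j, z' j ∈ ball (0:ℂ) 1 := fun j => hz j.succ
      have hinj' : Function.Injective z' := fun a b h => by
        have := hinj h
        exact Fin.succ_injective n this
      have hsuccne : ∀ j : Fin n, z' j ≠ z₀ := by
        intro j h
        exact (Fin.succ_ne_zero j) (hinj h)
      have hmobne : ∀ x ∈ ball (0:ℂ) 1, x ≠ z₀ → mob (-z₀) x ≠ 0 := by
        intro x hx hxz h
        rw [mob, div_eq_zero_iff] at h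
        rcases h with h | h
        · exact hxz (by linear_combination h)
        · exact mob_denom_ne hz₀D' (mem_D_iff.1 hx).le h
      have hqg_eq : ∀ j : Fin n, qg (z' j) = w' j := by
        intro j
        have hxD := hz' j
        have hxz := hsuccne j
        have hfg : f₁ (z' j) = g₁ (z' j) := by
          rw [hf₁def, hg₁def]; simp only
          rw [hfi j.succ, hgi j.succ]
        have h1 : f₁ (z' j) = qf (z' j) * mob (-z₀) (z' j) := hqff (z' j) hxD
        have h2 : g₁ (z' j) = qg (z' j) * mob (-z₀) (z' j) := hqgf (z' j) hxD
        have h3 : qg (z' j) * mob (-z₀) (z' j) = qf (z' j) * mob (-z₀) (z' j) := by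
          rw [← h1, ← h2, hfg]
        exact mul_right_cancel₀ (hmobne _ hxD hxz) h3
      -- non-uniqueness passes to the quotients
      have hxhz : xh ≠ z₀ := by
        intro h
        apply hxhne
        rw [h, hfi 0, hgi 0]
      have hf₁g₁ : f₁ xh ≠ g₁ xh := by
        intro h
        apply hxhne
        have := congrArg (mob w₀) h
        rw [hf₁def, hg₁def] at this
        simp only at this
        rwa [mob_inv hw₀D (hflt _ hxhD), mob_inv hw₀D (hglt _ hxhD)] at this
      have hne' : ¬ EqOn qf qg (ball (0:ℂ) 1) := by
        intro hEq
        apply hf₁g₁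
        have h1 : f₁ xh = qf xh * mob (-z₀) xh := hqff xh hxhD
        have h2 : g₁ xh = qg xh * mob (-z₀) xh := hqgf xh hxhD
        rw [h1, h2, hEq hxhD]
      -- apply the inductive hypothesis
      have hqfm : MapsTo qf (ball (0:ℂ) 1) (closedBall (0:ℂ) 1) := by
        intro x hx
        rw [mem_closedBall, Complex.dist_eq, sub_zero]
        exact hqfb x hx
      have hqgm : MapsTo qg (ball (0:ℂ) 1) (closedBall (0:ℂ) 1) := by
        intro x hx
        rw [mem_closedBall, Complex.dist_eq, sub_zero]
        exact hqgb x hx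
      obtain ⟨F₂, hF₂d, ⟨c, hc, hF₂b⟩, hF₂i⟩ :=
        ih z' hz' hinj' w' qf qg hqfd hqfm (fun j => rfl) hqgd hqgm hqg_eq hne'
      have hc0 : 0 ≤ c := le_trans (norm_nonneg (F₂ 0)) (hF₂b 0 (by simp))
      -- reconstruct the strict solution
      set G : ℂ → ℂ := fun x => mob (-z₀) x * F₂ x with hGdef
      have hGd : DifferentiableOn ℂ G (ball (0:ℂ) 1) := by
        refine DifferentiableOn.mul ?_ hF₂d
        exact mob_diffOn hz₀D' differentiableOn_id fun x hx => (mem_D_iff.1 hx).le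
      have hGb : ∀ x ∈ ball (0:ℂ) 1, norm (G x) ≤ c := by
        intro x hx
        rw [hGdef]
        simp only
        rw [norm_mul]
        calc norm (mob (-z₀) x) * norm (F₂ x) ≤ 1 * c :=
              mul_le_mul (mob_abs_lt hz₀D' (mem_D_iff.1 hx)).le (hF₂b x hx)
                (norm_nonneg _) one_pos.le
          _ = c := one_mul c
      set F : ℂ → ℂ := fun x => mob w₀ (G x) with hFdef
      have hFd : DifferentiableOn ℂ F (ball (0:ℂ) 1) :=
        mob_diffOn hw₀D hGd fun x hx => (hGb x hx).trans hc.le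
      -- the strict bound
      set A : ℝ := (1 - c^2) * (1 - normSq w₀) with hAdef
      have hA0 : 0 < A := by
        have := normSq_lt_one' hw₀D
        have : 0 < 1 - normSq w₀ := by linarith
        have hcc : c^2 < 1 := by nlinarith
        nlinarith
      have hA4 : A ≤ 4 := by
        have h1 : normSq w₀ ≥ 0 := normSq_nonneg _
        have h3 : normSq w₀ < 1 := normSq_lt_one' hw₀D
        have hcc : c^2 < 1 := by nlinarith
        rw [hAdef]
        nlinarith
      set c' : ℝ := Real.sqrt (1 - A/4) with hc'def
      have hc'1 : c' < 1 := by
        rw [hc'def]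
        calc Real.sqrt (1 - A/4) < Real.sqrt 1 :=
              Real.sqrt_lt_sqrt (by linarith) (by linarith)
          _ = 1 := Real.sqrt_one
      have hFb : ∀ x ∈ ball (0:ℂ) 1, norm (F x) ≤ c' := by
        intro x hx
        have hGx := hGb x hx
        have hGx1 : norm (G x) ≤ 1 := hGx.trans hc.le
        have hid := mob_one_sub_normSq hw₀D hGx1
        have hden_ne := mob_denom_ne hw₀D hGx1
        have hden_pos : 0 < normSq (1 + (starRingEnd ℂ) w₀ * G x) := by
          simpa [Complex.normSq_pos] using hden_ne
        have hden_le : normSq (1 + (starRingEnd ℂ) w₀ * G x) ≤ 4 := by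
          have habs : norm (1 + (starRingEnd ℂ) w₀ * G x) ≤ 2 := by
            calc norm (1 + (starRingEnd ℂ) w₀ * G x)
                ≤ norm 1 + norm ((starRingEnd ℂ) w₀ * G x) :=
                  norm_add_le _ _
              _ ≤ 1 + 1 := by
                  have h5 : norm w₀ * norm (G x) ≤ 1 := by
                    calc norm w₀ * norm (G x) ≤ 1 * 1 :=
                          mul_le_mul hw₀D.le hGx1 (norm_nonneg _) zero_le_one
                      _ = 1 := mul_one 1
                  simp only [norm_one, norm_mul, Complex.norm_conj]
                  linarith
              _ = 2 := by norm_num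
          rw [← Complex.sq_norm]
          nlinarith [norm_nonneg (1 + (starRingEnd ℂ) w₀ * G x)]
        have hnum : A ≤ (1 - normSq (G x)) * (1 - normSq w₀) := by
          have h1 : normSq (G x) ≤ c^2 := by
            rw [← Complex.sq_norm]
            nlinarith [norm_nonneg (G x)]
          have h2 : 0 ≤ 1 - normSq w₀ := by
            have := normSq_lt_one' hw₀D; linarith
          rw [hAdef]
          nlinarith
        have hkey : A/4 ≤ 1 - normSq (F x) := by
          rw [hFdef]
          simp only
          rw [hid]
          have hnum0 : 0 ≤ (1 - normSq (G x)) * (1 - normSq w₀) := le_trans hA0.le hnum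
          exact div_le_div₀ hnum0 hnum hden_pos hden_le
        have hFx : normSq (F x) ≤ 1 - A/4 := by linarith
        rw [Complex.norm_def, hc'def]
        exact Real.sqrt_le_sqrt hFx
      -- interpolation
      have hFi : ∀ j : Fin (n+1), F (z j) = w j := by
        intro j
        refine Fin.cases ?_ ?_ j
        · rw [hFdef, hGdef]
          simp only
          rw [← hz₀def, mob_self_neg, zero_mul, mob_zero, ← hw₀def]
        · intro i
          have hxD := hz i.succ
          have hGeq : G (z i.succ) = f₁ (z i.succ) := by
            have h1 : F₂ (z i.succ) = qf (z i.succ) := hF₂i i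
            have h2 : f₁ (z i.succ) = qf (z i.succ) * mob (-z₀) (z i.succ) :=
              hqff (z i.succ) hxD
            calc G (z i.succ) = mob (-z₀) (z i.succ) * F₂ (z i.succ) := rfl
              _ = mob (-z₀) (z i.succ) * qf (z i.succ) := by rw [h1]
              _ = qf (z i.succ) * mob (-z₀) (z i.succ) := mul_comm _ _
              _ = f₁ (z i.succ) := h2.symm
          show mob w₀ (G (z i.succ)) = w i.succ
          rw [hGeq]
          show mob w₀ (mob (-w₀) (f (z i.succ))) = w i.succ
          rw [mob_inv hw₀D (hflt _ hxD), hfi i.succ]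
      exact ⟨F, hFd, ⟨c', hc'1, hFb⟩, hFi⟩


theorem stmt15 (n : ℕ) (z : Fin n → ℂ)
    (hz : ∀ j, z j ∈ ball (0:ℂ) 1) (hinj : Function.Injective z)
    (w : Fin n → ℂ) (hw : ∀ j, w j ∈ closedBall (0:ℂ) 1)
    (hsolv : ∃ f : ℂ → ℂ, DifferentiableOn ℂ f (ball (0:ℂ) 1) ∧
      MapsTo f (ball (0:ℂ) 1) (closedBall (0:ℂ) 1) ∧ ∀ j, f (z j) = w j) :
    (∀ f g : ℂ → ℂ,
        (DifferentiableOn ℂ f (ball (0:ℂ) 1) ∧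
          MapsTo f (ball (0:ℂ) 1) (closedBall (0:ℂ) 1) ∧ ∀ j, f (z j) = w j) →
        (DifferentiableOn ℂ g (ball (0:ℂ) 1) ∧
          MapsTo g (ball (0:ℂ) 1) (closedBall (0:ℂ) 1) ∧ ∀ j, g (z j) = w j) →
        EqOn f g (ball (0:ℂ) 1)) ↔
      w ∈ frontier (PickBodyD n z) := by
  have hopen := pick_open n z hz hinj
  have hclos := pick_mem_closure n z w hw hsolv
  rw [frontier, hopen.interior_eq]
  constructor
  · intro huniq
    refine ⟨hclos, ?_⟩
    intro hmem
    obtain ⟨f, hfd, ⟨c, hc, hfb⟩, hfi⟩ := hmem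
    obtain ⟨xh, hxhD, hxhne⟩ := exists_ball_not_range n z
    classical
    set P : ℂ → ℂ := fun x => ∏ j, (x - z j) with hP
    have hPd : Differentiable ℂ P :=
      Differentiable.fun_finsetProd fun j _ => differentiable_id.sub_const _
    have hPb : ∀ x ∈ ball (0:ℂ) 1, norm (P x) ≤ 2^n := by
      intro x hx
      rw [hP]
      simp only
      rw [norm_prod]
      calc (∏ j, norm (x - z j)) ≤ ∏ _j : Fin n, (2:ℝ) := by
            apply Finset.prod_le_prod
            · intro j _; exact norm_nonneg _
            · intro j _
              calc norm (x - z j) ≤ norm x + norm (z j) := by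
                    simpa [sub_eq_add_neg] using norm_add_le x (-(z j))
                _ ≤ 2 := by
                    have h1 := mem_D_iff.1 hx
                    have h2 := mem_D_iff.1 (hz j)
                    linarith
        _ = 2^n := by simp [Finset.prod_const]
      
    have hPz : ∀ j, P (z j) = 0 := by
      intro j
      rw [hP]
      simp only
      exact Finset.prod_eq_zero (Finset.mem_univ j) (by ring)
    have hPxh : P xh ≠ 0 := by
      rw [hP]
      simp only
      rw [Finset.prod_ne_zero_iff]
      intro j _
      exact sub_ne_zero.2 (hxhne j)
    set ε : ℝ := (1 - c)/2^(n+1) with hεdef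
    have hε : 0 < ε := by
      apply div_pos (by linarith)
      positivity
    set g : ℂ → ℂ := fun x => f x + (ε:ℂ) * P x with hg
    have hfm : MapsTo f (ball (0:ℂ) 1) (closedBall (0:ℂ) 1) := by
      intro x hx
      rw [mem_closedBall, Complex.dist_eq, sub_zero]
      exact (hfb x hx).trans hc.le
    have hgb : ∀ x ∈ ball (0:ℂ) 1, norm (g x) ≤ 1 := by
      intro x hx
      rw [hg]
      simp only
      calc norm (f x + (ε:ℂ) * P x)
          ≤ norm (f x) + norm ((ε:ℂ) * P x) := norm_add_le _ _
        _ ≤ c + ε * 2^n := by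
            apply add_le_add (hfb x hx)
            rw [norm_mul, Complex.norm_real, Real.norm_eq_abs, _root_.abs_of_nonneg hε.le]
            exact mul_le_mul_of_nonneg_left (hPb x hx) hε.le
        _ ≤ 1 := by
            rw [hεdef]
            have h2 : (0:ℝ) < 2^n := by positivity
            have : (1 - c)/2^(n+1) * 2^n = (1-c)/2 := by
              rw [pow_succ]
              field_simp
            rw [this]
            linarith
    have hgm : MapsTo g (ball (0:ℂ) 1) (closedBall (0:ℂ) 1) := by
      intro x hx
      rw [mem_closedBall, Complex.dist_eq, sub_zero]
      exact hgb x hx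
    have hgd : DifferentiableOn ℂ g (ball (0:ℂ) 1) :=
      hfd.add (((differentiable_const _).mul hPd).differentiableOn)
    have hgi : ∀ j, g (z j) = w j := by
      intro j
      rw [hg]
      simp only
      rw [hfi j, hPz j, mul_zero, add_zero]
    have hEq := huniq f g ⟨hfd, hfm, hfi⟩ ⟨hgd, hgm, hgi⟩
    have := hEq hxhD
    rw [hg] at this
    simp only at this
    have hzero : (ε:ℂ) * P xh = 0 := by linear_combination -this
    rcases mul_eq_zero.1 hzero with h | h
    · exact hε.ne' (by exact_mod_cast h)
    · exact hPxh h
  · rintro ⟨-, hnotmem⟩ f g hfsol hgsol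
    by_contra hne
    exact hnotmem (pick_key n z hz hinj w f g hfsol.1 hfsol.2.1 hfsol.2.2
      hgsol.1 hgsol.2.1 hgsol.2.2 hne)
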